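/- Let $r \geq t \geq 3$, $K = K_{n_1,\ldots,n_r}$ with classes $V_1,\ldots,V_r$ of sizes $n_1 \geq \cdots \geq n_r$, and let $\mathcal{P} = (P_1,\ldots,P_{t-1})$ be an extremal $(t-1)$-partition (i.e., $e(K[\mathcal{P}])$ is maximum among all $(t-1)$-partitions of $V(K)$). If $V_i \cap P_j \neq \emptyset$ for some $i,j$, then for every $j' \neq j$ we have $|P_j \setminus V_i| \leq |P_{j'} \setminus V_i|$. In particular, if $V_i$ is partial in both $P_j$ and $P_{j'}$, then $|P_j \setminus V_i| = |P_{j'} \setminus V_i|$. -/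

import Mathlib

/-- The subgraph `K[𝒫]` of `K_{n₁,…,n_r}` keeping only edges between different classes
`V_i` and different parts `P_j` of the vertex partition `P`. -/
def multipartitePartGraph {r s : ℕ} (n : Fin r → ℕ)
    (P : (Σ i : Fin r, Fin (n i)) → Fin s) : SimpleGraph (Σ i : Fin r, Fin (n i)) where
  Adj u v := u.1 ≠ v.1 ∧ P u ≠ P v
  symm := ⟨fun _ _ h => ⟨h.1.symm, h.2.symm⟩⟩
  loopless := ⟨fun _ h => h.1 rfl⟩

/-- `e(K[𝒫])`, the number of edges of `K_{n₁,…,n_r}[𝒫]`. -/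
noncomputable def partVal {r s : ℕ} (n : Fin r → ℕ)
    (P : (Σ i : Fin r, Fin (n i)) → Fin s) : ℕ :=
  (multipartitePartGraph n P).edgeSet.ncard

/-- The class `V_i` is partial in the part `P_j`:
`V_i ∩ P_j ≠ ∅` and `V_i ⊄ P_j`. -/
def PartialIn {r s : ℕ} {n : Fin r → ℕ} (P : (Σ i : Fin r, Fin (n i)) → Fin s)
    (i : Fin r) (j : Fin s) : Prop :=
  (∃ v : Σ i : Fin r, Fin (n i), v.1 = i ∧ P v = j) ∧
  (∃ v : Σ i : Fin r, Fin (n i), v.1 = i ∧ P v ≠ j)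

instance {r s : ℕ} (n : Fin r → ℕ) (P : (Σ i : Fin r, Fin (n i)) → Fin s) :
    DecidableRel (multipartitePartGraph n P).Adj := fun u v => inferInstanceAs (Decidable (u.1 ≠ v.1 ∧ P u ≠ P v))

/-- Twice the number of edges of `K[𝒫]` counts ordered pairs. -/
lemma partVal_eq {r s : ℕ} (n : Fin r → ℕ) (P : (Σ i : Fin r, Fin (n i)) → Fin s) :
    2 * partVal n P = ∑ u : (Σ i : Fin r, Fin (n i)), ∑ v : (Σ i : Fin r, Fin (n i)),
      (if u.1 ≠ v.1 ∧ P u ≠ P v then 1 else 0) := by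
  have h1 : partVal n P = (multipartitePartGraph n P).edgeFinset.card := by
    rw [partVal, ← SimpleGraph.coe_edgeFinset, Set.ncard_coe_finset]
  rw [h1, ← SimpleGraph.sum_degrees_eq_twice_card_edges]
  refine Finset.sum_congr rfl fun u _ => ?_
  rw [SimpleGraph.degree, SimpleGraph.neighborFinset_eq_filter, Finset.card_filter]
  rfl


/-- Pointwise exchange identity. -/
lemma pt_identity {r s : ℕ} {n : Fin r → ℕ} (P : (Σ i : Fin r, Fin (n i)) → Fin s)
    (i : Fin r) (j j' : Fin s) (u v : (Σ i : Fin r, Fin (n i))) :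
    (if u.1 ≠ v.1 ∧ P u ≠ P v then 1 else 0)
    + (if u.1 = i ∧ P u = j then (1:ℕ) else 0) * (if v.1 ≠ i ∧ P v = j then 1 else 0)
    + (if v.1 = i ∧ P v = j then 1 else 0) * (if u.1 ≠ i ∧ P u = j then 1 else 0)
    = (if u.1 ≠ v.1 ∧ (if u.1 = i ∧ P u = j then j' else P u)
          ≠ (if v.1 = i ∧ P v = j then j' else P v) then 1 else 0)
    + (if u.1 = i ∧ P u = j then 1 else 0) * (if v.1 ≠ i ∧ P v = j' then 1 else 0)
    + (if v.1 = i ∧ P v = j then 1 else 0) * (if u.1 ≠ i ∧ P u = j' then 1 else 0) := by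
  by_cases h1 : u.1 = i <;> by_cases h2 : P u = j <;> by_cases h3 : v.1 = i <;>
    by_cases h4 : P v = j <;> by_cases h5 : P u = j' <;> by_cases h6 : P v = j' <;>
    by_cases h7 : u.1 = v.1 <;> by_cases h8 : P u = P v <;>
    simp_all <;> grind

/-- The key exchange lemma: if `V_i ∩ P_j ≠ ∅` then `|P_j \ V_i| ≤ |P_{j'} \ V_i|`. -/
lemma key_exchange {r s : ℕ} (n : Fin r → ℕ)
    (P : (Σ i : Fin r, Fin (n i)) → Fin s)
    (hmax : ∀ Q : (Σ i : Fin r, Fin (n i)) → Fin s, partVal n Q ≤ partVal n P)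
    (i : Fin r) (j j' : Fin s)
    (hex : ∃ v : Σ i : Fin r, Fin (n i), v.1 = i ∧ P v = j) :
    {v : Σ i : Fin r, Fin (n i) | P v = j ∧ v.1 ≠ i}.ncard ≤
    {v : Σ i : Fin r, Fin (n i) | P v = j' ∧ v.1 ≠ i}.ncard := by
  classical
  set Q : (Σ i : Fin r, Fin (n i)) → Fin s := fun v => if v.1 = i ∧ P v = j then j' else P v with hQ
  set sInd : (Σ i : Fin r, Fin (n i)) → ℕ := fun u => if u.1 = i ∧ P u = j then 1 else 0 with hs
  set b : Fin s → (Σ i : Fin r, Fin (n i)) → ℕ := fun k v => if v.1 ≠ i ∧ P v = k then 1 else 0 with hb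
  -- pointwise exchange identity
  have hpt : ∀ u v : (Σ i : Fin r, Fin (n i)),
      (if u.1 ≠ v.1 ∧ P u ≠ P v then 1 else 0) + sInd u * b j v + sInd v * b j u
      = (if u.1 ≠ v.1 ∧ Q u ≠ Q v then 1 else 0) + sInd u * b j' v + sInd v * b j' u := by
    intro u v
    simpa only [hQ, hs, hb] using pt_identity P i j j' u v
  have H0 : (∑ u : (Σ i : Fin r, Fin (n i)), ∑ v : (Σ i : Fin r, Fin (n i)),
        ((if u.1 ≠ v.1 ∧ P u ≠ P v then 1 else 0) + sInd u * b j v + sInd v * b j u))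
      = ∑ u : (Σ i : Fin r, Fin (n i)), ∑ v : (Σ i : Fin r, Fin (n i)),
        ((if u.1 ≠ v.1 ∧ Q u ≠ Q v then 1 else 0) + sInd u * b j' v + sInd v * b j' u) :=
    Finset.sum_congr rfl fun u _ => Finset.sum_congr rfl fun v _ => hpt u v
  have e1 : ∀ f g : (Σ i : Fin r, Fin (n i)) → ℕ, (∑ u : (Σ i : Fin r, Fin (n i)), ∑ v : (Σ i : Fin r, Fin (n i)), f u * g v) = (∑ u : (Σ i : Fin r, Fin (n i)), f u) * (∑ v : (Σ i : Fin r, Fin (n i)), g v) := by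
    intro f g; rw [Finset.sum_mul_sum]
  have e2 : ∀ f g : (Σ i : Fin r, Fin (n i)) → ℕ, (∑ u : (Σ i : Fin r, Fin (n i)), ∑ v : (Σ i : Fin r, Fin (n i)), f v * g u) = (∑ v : (Σ i : Fin r, Fin (n i)), f v) * (∑ u : (Σ i : Fin r, Fin (n i)), g u) := by
    intro f g; rw [Finset.sum_comm]; exact e1 f g
  set cS := ∑ u : (Σ i : Fin r, Fin (n i)), sInd u with hcS
  have expand : ∀ (R : (Σ i : Fin r, Fin (n i)) → Fin s) (k : Fin s),
      (∑ u : (Σ i : Fin r, Fin (n i)), ∑ v : (Σ i : Fin r, Fin (n i)),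
        ((if u.1 ≠ v.1 ∧ R u ≠ R v then 1 else 0) + sInd u * b k v + sInd v * b k u))
      = 2 * partVal n R + cS * (∑ v : (Σ i : Fin r, Fin (n i)), b k v) + cS * (∑ v : (Σ i : Fin r, Fin (n i)), b k v) := by
    intro R k
    simp only [Finset.sum_add_distrib]
    rw [partVal_eq, e1, e2, hcS]
  rw [expand P j, expand Q j'] at H0
  -- positivity of cS
  obtain ⟨v0, hv1, hv2⟩ := hex
  have hpos : 0 < cS := by
    refine Finset.sum_pos' (fun _ _ => Nat.zero_le _) ⟨v0, Finset.mem_univ _, ?_⟩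
    simp [hs, hv1, hv2]
  have hQle : partVal n Q ≤ partVal n P := hmax Q
  have hmul : cS * (∑ v : (Σ i : Fin r, Fin (n i)), b j v) ≤ cS * (∑ v : (Σ i : Fin r, Fin (n i)), b j' v) := by omega
  have hle : (∑ v : (Σ i : Fin r, Fin (n i)), b j v) ≤ ∑ v : (Σ i : Fin r, Fin (n i)), b j' v := Nat.le_of_mul_le_mul_left hmul hpos
  have hA : ∀ k : Fin s, {v : (Σ i : Fin r, Fin (n i)) | P v = k ∧ v.1 ≠ i}.ncard = ∑ v : (Σ i : Fin r, Fin (n i)), b k v := by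
    intro k
    rw [Set.ncard_eq_toFinset_card']
    simp only [Set.toFinset_setOf, Finset.card_filter, hb]
    exact Finset.sum_congr rfl fun v _ => if_congr and_comm rfl rfl
  rw [hA j, hA j']
  exact hle

/-- For an extremal `(t-1)`-partition `𝒫`: if `V_i ∩ P_j ≠ ∅` then
`|P_j \ V_i| ≤ |P_{j'} \ V_i|` for every `j' ≠ j`; in particular, if `V_i` is partial
in both `P_j` and `P_{j'}` then `|P_j \ V_i| = |P_{j'} \ V_i|`. -/
theorem stmt7 (r t : ℕ) (ht : 3 ≤ t) (hr : t ≤ r) (n : Fin r → ℕ)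
    (hpos : ∀ i, 0 < n i) (hmono : Antitone n)
    (P : (Σ i : Fin r, Fin (n i)) → Fin (t - 1))
    (hmax : ∀ Q : (Σ i : Fin r, Fin (n i)) → Fin (t - 1), partVal n Q ≤ partVal n P) :
    (∀ (i : Fin r) (j j' : Fin (t - 1)),
      (∃ v : Σ i : Fin r, Fin (n i), v.1 = i ∧ P v = j) → j' ≠ j →
        {v : Σ i : Fin r, Fin (n i) | P v = j ∧ v.1 ≠ i}.ncard ≤
        {v : Σ i : Fin r, Fin (n i) | P v = j' ∧ v.1 ≠ i}.ncard) ∧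
    (∀ (i : Fin r) (j j' : Fin (t - 1)),
      PartialIn P i j → PartialIn P i j' →
        {v : Σ i : Fin r, Fin (n i) | P v = j ∧ v.1 ≠ i}.ncard =
        {v : Σ i : Fin r, Fin (n i) | P v = j' ∧ v.1 ≠ i}.ncard) := by
  constructor
  · intro i j j' hex _
    exact key_exchange n P hmax i j j' hex
  · intro i j j' hj hj'
    exact le_antisymm (key_exchange n P hmax i j j' hj.1)
      (key_exchange n P hmax i j' j hj'.1)
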